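/- arXiv:1306.3954 — 4 statements merged into one kernel-verified Lean document; each statement's English description precedes it below -/
import Mathlib

section
/- Let I be a set and {G_i : i ∈ I} a family of groups each of which satisfies the ascending chain condition on subgroups (every ascending chain of subgroups stabilizes). Then a subgroup H of the direct product G = ∏_{i∈I} G_i is controllable in G if and only if it is uniformly controllable in G. -/
/-- Projection of an element of the direct product `∀ i, G i` to the
coordinates in `J`. -/
def proj {I : Type*} {G : I → Type*} (J : Set I) (g : ∀ i, G i) : ∀ j : J, G j :=
  fun j => g j

/-- A subgroup `H` of the direct product `G = ∏_{i ∈ I} G_i` is *controllable*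
in `G` if `p_J(H) = p_J(H ∩ ⊕_{i ∈ I} G_i)` for every finite `J ⊆ I`. -/
def Controllable {I : Type*} {G : I → Type*} [∀ i, Group (G i)]
    (H : Subgroup (∀ i, G i)) : Prop :=
  ∀ J : Set I, J.Finite →
    proj J '' (H : Set (∀ i, G i)) =
      proj J '' ((H : Set (∀ i, G i)) ∩ {g | {i | g i ≠ 1}.Finite})

/-- A subgroup `H` of the direct product `G = ∏_{i ∈ I} G_i` is *uniformly
controllable* in `G` if for every finite `J ⊆ I` there is a finite `K ⊆ I`
with `p_J(H) = p_J(H ∩ ⊕_{i ∈ K} G_i)`. -/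
def UniformlyControllable {I : Type*} {G : I → Type*} [∀ i, Group (G i)]
    (H : Subgroup (∀ i, G i)) : Prop :=
  ∀ J : Set I, J.Finite → ∃ K : Set I, K.Finite ∧
    proj J '' (H : Set (∀ i, G i)) =
      proj J '' ((H : Set (∀ i, G i)) ∩ {g | ∀ i ∉ K, g i = 1})

/-- Sequential ascending chain condition on subgroups. -/
def AccS (A : Type*) [Group A] : Prop :=
  ∀ c : ℕ → Subgroup A, (∀ n, c n ≤ c (n + 1)) → ∃ N, ∀ m, N ≤ m → c m = c N

lemma accS_of_subsingleton (A : Type*) [Group A] [Subsingleton A] : AccS A := by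
  intro c _
  refine ⟨0, fun m _ => ?_⟩
  ext x
  simp [Subsingleton.elim x 1, one_mem]

lemma accS_of_injective {A B : Type*} [Group A] [Group B] (f : A →* B)
    (hf : Function.Injective f) (hB : AccS B) : AccS A := by
  intro c hc
  obtain ⟨N, hN⟩ := hB (fun n => (c n).map f) (fun n => Subgroup.map_mono (hc n))
  exact ⟨N, fun m hm => (Subgroup.map_injective hf) (hN m hm)⟩

/-- ACC passes through a group extension. -/
lemma accS_of_hom {P A : Type*} [Group P] [Group A] (φ : P →* A)
    (hA : AccS A) (hK : AccS φ.ker) : AccS P := by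
  intro c hc
  have hmono : Monotone c := monotone_nat_of_le_succ hc
  obtain ⟨N₁, hN₁⟩ := hA (fun n => (c n).map φ) (fun n => Subgroup.map_mono (hc n))
  obtain ⟨N₂, hN₂⟩ := hK (fun n => (c n).comap φ.ker.subtype)
    (fun n => Subgroup.comap_mono (hc n))
  refine ⟨max N₁ N₂, fun m hm => ?_⟩
  have hle : c (max N₁ N₂) ≤ c m := hmono hm
  refine le_antisymm (fun x hx => ?_) hle
  have h1 : φ x ∈ (c (max N₁ N₂)).map φ := by
    have e1 : (c m).map φ = (c N₁).map φ := hN₁ m (le_trans (le_max_left _ _) hm)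
    have e2 : (c (max N₁ N₂)).map φ = (c N₁).map φ := hN₁ _ (le_max_left _ _)
    rw [e2, ← e1]
    exact Subgroup.mem_map_of_mem φ hx
  obtain ⟨y, hy, hxy⟩ := h1
  have hker : x * y⁻¹ ∈ φ.ker := by
    simp [MonoidHom.mem_ker, hxy]
  have hmem : (⟨x * y⁻¹, hker⟩ : φ.ker) ∈ (c m).comap φ.ker.subtype := by
    simp only [Subgroup.mem_comap, Subgroup.coe_subtype]
    exact mul_mem hx (inv_mem (hle hy))
  have e1 : (c m).comap φ.ker.subtype = (c N₂).comap φ.ker.subtype :=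
    hN₂ m (le_trans (le_max_right _ _) hm)
  have e2 : (c (max N₁ N₂)).comap φ.ker.subtype = (c N₂).comap φ.ker.subtype :=
    hN₂ _ (le_max_right _ _)
  rw [e1, ← e2] at hmem
  have hx' : x * y⁻¹ ∈ c (max N₁ N₂) := hmem
  have := mul_mem hx' hy
  simpa using this

lemma accS_pi_finset {ι : Type*} (G : ι → Type*) [∀ i, Group (G i)]
    (hacc : ∀ i, AccS (G i)) (s : Finset ι) : AccS (∀ i : s, G i) := by
  classical
  induction s using Finset.induction with
  | empty =>
    have : Subsingleton (∀ i : (∅ : Finset ι), G i) :=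
      ⟨fun f g => funext fun i => absurd i.2 (Finset.notMem_empty _)⟩
    exact accS_of_subsingleton _
  | @insert a s ha ih =>
    set φ : (∀ i : (insert a s : Finset ι), G i) →* G a :=
      Pi.evalMonoidHom (fun i : (insert a s : Finset ι) => G i)
        ⟨a, Finset.mem_insert_self a s⟩ with hφ
    refine accS_of_hom φ (hacc a) ?_
    set ρ : (∀ i : (insert a s : Finset ι), G i) →* (∀ i : s, G i) :=
      { toFun := fun g i => g ⟨i, Finset.mem_insert_of_mem i.2⟩
        map_one' := rfl
        map_mul' := fun _ _ => rfl } with hρ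
    refine accS_of_injective (ρ.comp φ.ker.subtype) ?_ ih
    intro x y hxy
    ext ⟨i, hi⟩
    rcases Finset.mem_insert.1 hi with h | h
    · have hi' : (⟨i, hi⟩ : (insert a s : Finset ι)) = ⟨a, Finset.mem_insert_self a s⟩ :=
        Subtype.ext h
      rw [hi']
      have hx : φ (x : ∀ i : (insert a s : Finset ι), G i) = 1 := MonoidHom.mem_ker.mp x.2
      have hy : φ (y : ∀ i : (insert a s : Finset ι), G i) = 1 := MonoidHom.mem_ker.mp y.2
      exact hx.trans hy.symm
    · exact congrFun hxy ⟨i, h⟩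

/-- The subgroup of the direct product of elements supported in `K`. -/
def suppSubgroup {I : Type*} (G : I → Type*) [∀ i, Group (G i)] (K : Set I) :
    Subgroup (∀ i, G i) where
  carrier := {g | ∀ i ∉ K, g i = 1}
  one_mem' := fun i _ => rfl
  mul_mem' := by
    intro a b ha hb i hi
    simp [Pi.mul_apply, ha i hi, hb i hi]
  inv_mem' := by
    intro a ha i hi
    simp [Pi.inv_apply, ha i hi]

theorem controllable_iff_uniformlyControllable_of_acc
    {I : Type*} (G : I → Type*) [∀ i, Group (G i)]
    (hacc : ∀ i, ∀ c : ℕ → Subgroup (G i), (∀ n, c n ≤ c (n + 1)) →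
      ∃ N, ∀ m, N ≤ m → c m = c N)
    (H : Subgroup (∀ i, G i)) :
    Controllable H ↔ UniformlyControllable H := by
  classical
  constructor
  · -- controllable → uniformly controllable
    intro hC J hJ
    -- the target group
    set A := ∀ j : J, G j with hA
    -- transfer ACC to A via the finset version
    have haccA : AccS A := by
      refine accS_of_injective
        (A := A) (B := ∀ j : hJ.toFinset, G j)
        { toFun := fun g j => g ⟨j, hJ.mem_toFinset.1 j.2⟩
          map_one' := rfl
          map_mul' := fun _ _ => rfl } ?_
        (accS_pi_finset G hacc hJ.toFinset)
      intro x y hxy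
      ext ⟨j, hj⟩
      exact congrFun hxy ⟨j, hJ.mem_toFinset.2 hj⟩
    -- projection as a monoid hom
    set π : (∀ i, G i) →* A :=
      { toFun := fun g j => g j
        map_one' := rfl
        map_mul' := fun _ _ => rfl } with hπ
    have hπproj : ∀ g : ∀ i, G i, π g = proj J g := fun g => rfl
    -- the family of subgroups
    set D : Set I → Subgroup A := fun K => (H ⊓ suppSubgroup G K).map π with hD
    have hDmono : ∀ {K K' : Set I}, K ⊆ K' → D K ≤ D K' := by
      intro K K' hKK
      refine Subgroup.map_mono (inf_le_inf le_rfl ?_)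
      intro g hg i hi
      exact hg i (fun h => hi (hKK h))
    -- the set of D K for finite K has a maximal element
    set S : Set (Subgroup A) := {P | ∃ K : Set I, K.Finite ∧ P = D K} with hS
    have hwf : WellFounded ((· > ·) : Subgroup A → Subgroup A → Prop) := by
      refine ((wellFoundedGT_iff_monotone_chain_condition (α := Subgroup A)).2 ?_).wf
      intro a
      obtain ⟨N, hN⟩ := haccA (fun n => a n) (fun n => a.mono (Nat.le_succ n))
      exact ⟨N, fun m hm => (hN m hm).symm⟩
    obtain ⟨P, hPS, hPmax⟩ := hwf.has_min S ⟨D ∅, ∅, Set.finite_empty, rfl⟩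
    obtain ⟨K₀, hK₀fin, rfl⟩ := hPS
    -- every finite K gives D K ≤ D K₀
    have hmax : ∀ K : Set I, K.Finite → D K ≤ D K₀ := by
      intro K hK
      have h1 : D K₀ ≤ D (K ∪ K₀) := hDmono Set.subset_union_right
      have h2 : ¬ D K₀ < D (K ∪ K₀) :=
        hPmax (D (K ∪ K₀)) ⟨K ∪ K₀, hK.union hK₀fin, rfl⟩
      have heq : D (K ∪ K₀) = D K₀ := by
        rcases h1.lt_or_eq with hlt | he
        · exact absurd hlt h2
        · exact he.symm
      calc D K ≤ D (K ∪ K₀) := hDmono Set.subset_union_left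
        _ = D K₀ := heq
    refine ⟨K₀, hK₀fin, ?_⟩
    -- proj J '' H = proj J '' (H ∩ ⊕_{K₀})
    apply Set.Subset.antisymm
    · rw [hC J hJ]
      rintro x ⟨g, ⟨hgH, hgfin⟩, rfl⟩
      have hg : g ∈ H ⊓ suppSubgroup G {i | g i ≠ 1} := by
        refine ⟨hgH, fun i hi => ?_⟩
        simpa using hi
      have : proj J g ∈ D {i | g i ≠ 1} := ⟨g, hg, rfl⟩
      have hmem : proj J g ∈ D K₀ := hmax _ hgfin this
      obtain ⟨g', hg', hgg'⟩ := hmem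
      exact ⟨g', ⟨hg'.1, hg'.2⟩, hgg'⟩
    · exact Set.image_mono (Set.inter_subset_left)
  · -- uniformly controllable → controllable
    intro hU J hJ
    obtain ⟨K, hKfin, hK⟩ := hU J hJ
    apply Set.Subset.antisymm
    · rw [hK]
      refine Set.image_mono ?_
      rintro g ⟨hgH, hgK⟩
      refine ⟨hgH, hKfin.subset ?_⟩
      intro i hi
      by_contra hiK
      exact hi (hgK i hiK)
    · exact Set.image_mono (Set.inter_subset_left)
end

section
/- Let I be a set and {G_i : i ∈ I} a family of finite discrete topological groups. Then for every subgroup H of the direct product G = ∏_{i∈I} G_i (with the Tychonoff product topology) the following are equivalent: (i) H is weakly controllable in G; (ii) H is controllable in G; (iii) H is uniformly controllable in G. -/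
/-- A subgroup `H` of the direct product `G = ∏_{i ∈ I} G_i` of topological
groups is *weakly controllable* in `G` if `H ∩ ⊕_{i ∈ I} G_i` is dense in `H`
(with respect to the Tychonoff product topology). -/
def WeaklyControllable {I : Type*} {G : I → Type*} [∀ i, Group (G i)]
    [∀ i, TopologicalSpace (G i)] (H : Subgroup (∀ i, G i)) : Prop :=
  (H : Set (∀ i, G i)) ⊆ closure ((H : Set (∀ i, G i)) ∩ {g | {i | g i ≠ 1}.Finite})

lemma my_wc_to_c {I : Type*} {G : I → Type*} [∀ i, Group (G i)]
    [∀ i, TopologicalSpace (G i)] [∀ i, DiscreteTopology (G i)]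
    (H : Subgroup (∀ i, G i)) (h : WeaklyControllable H) : Controllable H := by
  intro J hJ
  refine Set.Subset.antisymm ?_ (Set.image_mono Set.inter_subset_left)
  rintro _ ⟨g, hg, rfl⟩
  have hopen : IsOpen {x : ∀ i, G i | ∀ j ∈ J, x j = g j} := by
    have he : {x : ∀ i, G i | ∀ j ∈ J, x j = g j} = Set.pi J (fun i => {g i}) := by
      ext x; simp [Set.mem_pi]
    rw [he]
    exact isOpen_set_pi hJ (fun i _ => isOpen_discrete _)
  rcases mem_closure_iff.1 (h hg) _ hopen (fun j _ => rfl) with ⟨x, hx1, hx2⟩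
  exact ⟨x, hx2, funext fun j => hx1 j j.2⟩

lemma my_c_to_wc {I : Type*} {G : I → Type*} [∀ i, Group (G i)]
    [∀ i, TopologicalSpace (G i)]
    (H : Subgroup (∀ i, G i)) (hC : Controllable H) : WeaklyControllable H := by
  intro g hg
  rw [mem_closure_iff]
  intro U hU hgU
  rcases isOpen_pi_iff.1 hU g hgU with ⟨J, u, hu, hsub⟩
  have hmem : proj (↑J) g ∈ proj (↑J) '' (H : Set (∀ i, G i)) := ⟨g, hg, rfl⟩
  rw [hC _ J.finite_toSet] at hmem
  rcases hmem with ⟨x, hx, hxg⟩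
  refine ⟨x, hsub fun i hi => ?_, hx⟩
  have hxi : x i = g i := congrFun hxg ⟨i, hi⟩
  rw [hxi]; exact (hu i hi).2

lemma my_c_to_uc {I : Type*} {G : I → Type*} [∀ i, Group (G i)] [∀ i, Finite (G i)]
    (H : Subgroup (∀ i, G i)) (hC : Controllable H) : UniformlyControllable H := by
  intro J hJ
  classical
  haveI := hJ.to_subtype
  have key : ∀ y : ∀ j : J, G j, ∃ x : ∀ i, G i,
      (y ∈ proj J '' (H : Set (∀ i, G i)) →
        x ∈ (H : Set (∀ i, G i)) ∧ proj J x = y) ∧ {i | x i ≠ 1}.Finite := by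
    intro y
    by_cases hy : y ∈ proj J '' (H : Set (∀ i, G i))
    · rw [hC J hJ] at hy
      rcases hy with ⟨x, hx, rfl⟩
      exact ⟨x, fun _ => ⟨hx.1, rfl⟩, hx.2⟩
    · exact ⟨1, fun h => absurd h hy, by simp⟩
  choose F hF hfin using key
  refine ⟨⋃ y : ∀ j : J, G j, {i | F y i ≠ 1},
    Set.finite_iUnion hfin, ?_⟩
  refine Set.Subset.antisymm ?_ (Set.image_mono Set.inter_subset_left)
  rintro _ ⟨g, hg, rfl⟩
  have hy : proj J g ∈ proj J '' (H : Set (∀ i, G i)) := ⟨g, hg, rfl⟩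
  refine ⟨F (proj J g), ⟨(hF _ hy).1, ?_⟩, (hF _ hy).2⟩
  intro i hi
  by_contra h
  exact hi (Set.mem_iUnion.2 ⟨proj J g, h⟩)

lemma my_uc_to_c {I : Type*} {G : I → Type*} [∀ i, Group (G i)]
    (H : Subgroup (∀ i, G i)) (hU : UniformlyControllable H) : Controllable H := by
  intro J hJ
  rcases hU J hJ with ⟨K, hK, hEq⟩
  refine Set.Subset.antisymm ?_ (Set.image_mono Set.inter_subset_left)
  rw [hEq]
  apply Set.image_mono
  rintro g ⟨hg, hsupp⟩
  exact ⟨hg, hK.subset fun i hi => by_contra fun h => hi (hsupp i h)⟩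

theorem weaklyControllable_iff_controllable_iff_uniformlyControllable_of_finite
    {I : Type*} (G : I → Type*) [∀ i, Group (G i)] [∀ i, Finite (G i)]
    [∀ i, TopologicalSpace (G i)] [∀ i, IsTopologicalGroup (G i)]
    [∀ i, DiscreteTopology (G i)]
    (H : Subgroup (∀ i, G i)) :
    (WeaklyControllable H ↔ Controllable H) ∧
      (Controllable H ↔ UniformlyControllable H) := by
  exact ⟨⟨my_wc_to_c H, my_c_to_wc H⟩, ⟨my_c_to_uc H, my_uc_to_c H⟩⟩
end

section
/- Let I be a set, {G_i : i ∈ I} a family of topological groups, and H a subgroup of G = ∏_{i∈I} G_i (with the Tychonoff product topology) whose closure in G is compact. If H is uniformly controllable in G, then the closure of H in G is also uniformly controllable in G. -/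
open Topology Filter


theorem closure_uniformlyControllable_of_compact_closure
    {I : Type*} (G : I → Type*) [∀ i, Group (G i)]
    [∀ i, TopologicalSpace (G i)] [∀ i, IsTopologicalGroup (G i)]
    (H : Subgroup (∀ i, G i))
    (hcomp : IsCompact (closure (H : Set (∀ i, G i))))
    (hu : UniformlyControllable H) :
    UniformlyControllable H.topologicalClosure := by
  intro J hJ
  obtain ⟨K, hK, hKeq⟩ := hu J hJ
  refine ⟨K ∪ J, hK.union hJ, ?_⟩
  have hclcoe : (H.topologicalClosure : Set (∀ i, G i)) = closure (H : Set (∀ i, G i)) := rfl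
  apply Set.Subset.antisymm
  · rintro _ ⟨x, hx, rfl⟩
    rw [hclcoe] at hx
    -- choice function
    have key : ∀ g ∈ (H : Set (∀ i, G i)), ∃ g', g' ∈ (H : Set (∀ i, G i)) ∧
        (∀ i ∉ K, g' i = 1) ∧ proj J g' = proj J g := by
      intro g hg
      have : proj J g ∈ proj J '' ((H : Set (∀ i, G i)) ∩ {g | ∀ i ∉ K, g i = 1}) :=
        hKeq ▸ ⟨g, hg, rfl⟩
      obtain ⟨g', ⟨hg'H, hg'K⟩, hproj⟩ := this
      exact ⟨g', hg'H, hg'K, hproj⟩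
    classical
    set Φ : (∀ i, G i) → (∀ i, G i) :=
      fun g => if hg : g ∈ (H : Set (∀ i, G i)) then (key g hg).choose else 1 with hΦ
    have hΦH : ∀ g (hg : g ∈ (H : Set (∀ i, G i))), Φ g ∈ (H : Set (∀ i, G i)) := by
      intro g hg; rw [hΦ]; simp only [dif_pos hg]; exact (key g hg).choose_spec.1
    have hΦK : ∀ g (hg : g ∈ (H : Set (∀ i, G i))), ∀ i ∉ K, Φ g i = 1 := by
      intro g hg; rw [hΦ]; simp only [dif_pos hg]; exact (key g hg).choose_spec.2.1
    have hΦJ : ∀ g (hg : g ∈ (H : Set (∀ i, G i))), ∀ j ∈ J, Φ g j = g j := by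
      intro g hg j hj
      have := (key g hg).choose_spec.2.2
      have := congrFun this ⟨j, hj⟩
      rw [hΦ]; simp only [dif_pos hg]
      exact this
    set L : Filter (∀ i, G i) := 𝓝 x ⊓ Filter.principal (H : Set (∀ i, G i)) with hL
    haveI hLne : L.NeBot := mem_closure_iff_clusterPt.mp hx
    have hmemL : ∀ᶠ g in L, g ∈ (H : Set (∀ i, G i)) := by
      rw [hL]
      exact Filter.eventually_inf_principal.mpr (Filter.Eventually.of_forall fun g hg => hg)
    set F' : Filter (∀ i, G i) := Filter.map Φ L with hF'
    haveI : F'.NeBot := Filter.map_neBot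
    have hF'H : F' ≤ Filter.principal (H : Set (∀ i, G i)) := by
      rw [Filter.le_principal_iff, hF', Filter.mem_map]
      filter_upwards [hmemL] with g hg using hΦH g hg
    have hF'cl : F' ≤ Filter.principal (closure (H : Set (∀ i, G i))) :=
      hF'H.trans (Filter.principal_mono.mpr subset_closure)
    obtain ⟨y, hy, hycl⟩ := hcomp hF'cl
    set z : ∀ i, G i := fun i => if i ∈ J then x i else if i ∈ K ∪ J then y i else 1 with hz
    have hGfne : (𝓝 y ⊓ F').NeBot := hycl
    have hGz : 𝓝 y ⊓ F' ≤ 𝓝 z := by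
      rw [(nhds_pi : 𝓝 z = _), Filter.le_pi]
      intro i
      by_cases hiJ : i ∈ J
      · have hzi : z i = x i := by rw [hz]; simp [hiJ]
        rw [hzi]
        have h1 : Filter.Tendsto (fun g : ∀ i, G i => g i) L (𝓝 (x i)) := by
          have : Filter.Tendsto (fun g : ∀ i, G i => g i) (𝓝 x) (𝓝 (x i)) :=
            (continuous_apply i).tendsto x
          exact this.mono_left inf_le_left
        have h2 : Filter.Tendsto (fun g : ∀ i, G i => g i) F' (𝓝 (x i)) := by
          rw [hF', Filter.tendsto_map'_iff]
          refine h1.congr' ?_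
          filter_upwards [hmemL] with g hg using (hΦJ g hg i hiJ).symm
        exact h2.mono_left inf_le_right
      · by_cases hiK : i ∈ K ∪ J
        · have hzi : z i = y i := by rw [hz]; simp [hiJ, hiK]
          rw [hzi]
          exact ((continuous_apply i).tendsto y).mono_left inf_le_left
        · have hzi : z i = 1 := by rw [hz]; simp [hiJ, hiK]
          rw [hzi]
          have hiK' : i ∉ K := fun h => hiK (Or.inl h)
          have h2 : Filter.Tendsto (fun g : ∀ i, G i => g i) F' (𝓝 1) := by
            rw [hF', Filter.tendsto_map'_iff]
            refine tendsto_const_nhds.congr' ?_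
            filter_upwards [hmemL] with g hg using (hΦK g hg i hiK').symm
          exact h2.mono_left inf_le_right
    have hzcl : z ∈ closure (H : Set (∀ i, G i)) := by
      rw [mem_closure_iff_clusterPt]
      refine Filter.neBot_of_le (f := 𝓝 y ⊓ F') ?_
      exact le_inf hGz (inf_le_right.trans hF'H)
    refine ⟨z, ⟨?_, ?_⟩, ?_⟩
    · rw [hclcoe]; exact hzcl
    · intro i hi
      have hiJ : i ∉ J := fun h => hi (Or.inr h)
      rw [hz]; simp [hiJ, hi]
    · funext j
      have : z j = x j := by rw [hz]; simp [j.2]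
      exact this
  · exact Set.image_mono Set.inter_subset_left
end

section
/- Let p be a prime and A a discrete abelian p-group (every element of A has order a power of p). Let Â denote the Pontryagin dual of A, i.e., the group of continuous homomorphisms from A to the circle group with the compact-open topology. If the torsion part t(Â) = {χ ∈ Â : nχ = 0 for some positive integer n} is dense in Â, then ⋂_{n∈ℕ} pⁿA = {0}. -/
theorem inter_smul_pow_eq_bot_of_dense_torsion_dual
    (p : ℕ) (hp : p.Prime) (A : Type*) [AddCommGroup A]
    [TopologicalSpace A] [DiscreteTopology A]
    (hpgroup : ∀ a : A, ∃ n : ℕ, (p ^ n : ℕ) • a = 0)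
    (hdense : Dense {χ : PontryaginDual (Multiplicative A) | IsOfFinOrder χ}) :
    (⋂ n : ℕ, Set.range fun a : A => (p ^ n : ℕ) • a) = {0} := by
  ext x
  simp only [Set.mem_iInter, Set.mem_range, Set.mem_singleton_iff]
  constructor
  · intro hx
    set z : Multiplicative A := Multiplicative.ofAdd x with hz
    -- Step 1: every torsion character kills x
    have step1 : ∀ χ : PontryaginDual (Multiplicative A), IsOfFinOrder χ → χ z = 1 := by
      intro χ hχ
      set m := orderOf χ with hm
      have hmpos : 0 < m := hχ.orderOf_pos
      obtain ⟨b, hb⟩ := hx m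
      obtain ⟨e, he⟩ := hpgroup b
      set u : Circle := χ (Multiplicative.ofAdd b) with hu
      have hud : orderOf u ∣ m :=
        orderOf_map_dvd
          { toFun := fun ψ : PontryaginDual (Multiplicative A) => ψ (Multiplicative.ofAdd b),
            map_one' := rfl, map_mul' := fun f g => rfl } χ
      have hupow : u ^ (p ^ e) = 1 := by
        have : (Multiplicative.ofAdd b) ^ (p ^ e) = 1 := by
          rw [← ofAdd_nsmul, he]; rfl
        rw [hu, ← map_pow, this, map_one]
      have hudvd : orderOf u ∣ p ^ e := orderOf_dvd_of_pow_eq_one hupow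
      obtain ⟨j, hj, hjeq⟩ := (Nat.dvd_prime_pow hp).mp hudvd
      have hjm : j ≤ m := by
        have h1 : p ^ j ≤ m := Nat.le_of_dvd hmpos (hjeq ▸ hud)
        have h2 : j < p ^ j := Nat.lt_pow_self (n := j) hp.one_lt
        omega
      have hxz : z = (Multiplicative.ofAdd b) ^ (p ^ m) := by
        rw [hz, ← hb, ofAdd_nsmul]
      rw [hxz, map_pow, ← hu]
      exact orderOf_dvd_iff_pow_eq_one.mp (hjeq ▸ pow_dvd_pow p hjm)
    -- Step 2: every character kills x (density + closedness of the vanishing set)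
    have heval : Continuous fun χ : PontryaginDual (Multiplicative A) => χ z := by
      have h1 : Continuous fun f : C(Multiplicative A, Circle) => f z :=
        continuous_eval_const z
      exact h1.comp
        (ContinuousMonoidHom.isInducing_toContinuousMap (Multiplicative A) Circle).continuous
    have hclosed : IsClosed {χ : PontryaginDual (Multiplicative A) | χ z = 1} :=
      isClosed_singleton.preimage heval
    have step2 : ∀ χ : PontryaginDual (Multiplicative A), χ z = 1 := by
      intro χ
      have hsub : {χ : PontryaginDual (Multiplicative A) | IsOfFinOrder χ} ⊆
          {χ : PontryaginDual (Multiplicative A) | χ z = 1} := fun χ hχ => step1 χ hχ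
      have := hclosed.closure_subset_iff.mpr hsub
      exact this (hdense χ)
    -- Step 3: characters separate points
    by_contra hx0
    obtain ⟨c, hc⟩ := CharacterModule.exists_character_apply_ne_zero_of_ne_zero hx0
    -- build a Pontryagin character from c
    let g : ℚ →+ ℝ := (Rat.castHom ℝ).toAddMonoidHom
    have hg : AddSubgroup.zmultiples (1 : ℚ) ≤
        (AddSubgroup.zmultiples (1 : ℝ)).comap g := by
      intro y hy
      obtain ⟨n, rfl⟩ := AddSubgroup.mem_zmultiples_iff.mp hy
      refine AddSubgroup.mem_comap.mpr (AddSubgroup.mem_zmultiples_iff.mpr ⟨n, ?_⟩)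
      simp [g]
    let φ : AddCircle (1 : ℚ) →+ AddCircle (1 : ℝ) :=
      QuotientAddGroup.map _ _ g hg
    have hφ : ∀ y : AddCircle (1 : ℚ), φ y = 0 → y = 0 := by
      intro y hy
      induction y using QuotientAddGroup.induction_on with
      | H q =>
        have hq : φ (QuotientAddGroup.mk q) = QuotientAddGroup.mk (g q) := rfl
        rw [hq] at hy
        have : g q ∈ AddSubgroup.zmultiples (1 : ℝ) :=
          (QuotientAddGroup.eq_zero_iff _).mp hy
        obtain ⟨n, hn⟩ := AddSubgroup.mem_zmultiples_iff.mp this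
        have hqn : q = (n : ℚ) := by
          have : ((n : ℚ) : ℝ) = (q : ℝ) := by
            simpa [g] using hn
          exact_mod_cast this.symm
        refine (QuotientAddGroup.eq_zero_iff _).mpr ?_
        exact AddSubgroup.mem_zmultiples_iff.mpr ⟨n, by simp [hqn]⟩
    haveI : DiscreteTopology (Multiplicative A) := ‹DiscreteTopology A›
    let χ0 : Multiplicative A →* Circle :=
      { toFun := fun w => AddCircle.toCircle (φ (c w.toAdd))
        map_one' := by
          show AddCircle.toCircle (φ (c (0 : A))) = 1
          rw [map_zero, map_zero, AddCircle.toCircle_zero]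
        map_mul' := fun w₁ w₂ => by
          show AddCircle.toCircle (φ (c (w₁.toAdd + w₂.toAdd))) =
            AddCircle.toCircle (φ (c w₁.toAdd)) * AddCircle.toCircle (φ (c w₂.toAdd))
          rw [map_add, map_add, AddCircle.toCircle_add] }
    let χ : PontryaginDual (Multiplicative A) := ⟨χ0, continuous_of_discreteTopology⟩
    have hχx : χ z = 1 := step2 χ
    have hcx : AddCircle.toCircle (φ (c x)) = 1 := by
      exact hχx
    have : φ (c x) = 0 := by
      apply AddCircle.injective_toCircle one_ne_zero
      rw [hcx, AddCircle.toCircle_zero]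
    exact hc (hφ _ this)
  · rintro rfl n
    exact ⟨0, smul_zero _⟩
end
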